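/- arXiv:2411.12996 — 7 statements merged into one kernel-verified Lean document; each statement's English description precedes it below -/
import Mathlib

section
/- Let (E, ρ) be a metric space and μ a Borel probability measure on E such that μ(B(x,r)) ≤ ψ(r) for all x ∈ E and r ≥ 0, where ψ : [0,∞) → [0,∞) is increasing and B(x,r) := {y ∈ E : ρ(x,y) < r}. Let N ≥ 1 and let ν be a probability measure on E whose support is a finite set of N points. Then for every p ∈ [1,∞), every coupling π of ν and μ, and every r ≥ 0 satisfying ψ(r) ≤ 1/(2N), one has ∫_{E×E} ρ(x,y)^p π(dx,dy) ≥ r^p / 2. -/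
open MeasureTheory Metric Set

/-- lower bound on the transport cost between a measure supported on `N`
points and a measure `μ` all of whose balls of radius `r` have mass at most `ψ r ≤ 1/(2N)`. -/
theorem stmt_0
    {E : Type*} [MetricSpace E] [MeasurableSpace E] [BorelSpace E]
    (μ ν : Measure E) [IsProbabilityMeasure μ] [IsProbabilityMeasure ν]
    (ψ : ℝ → ℝ) (hψ : MonotoneOn ψ (Ici (0 : ℝ)))
    (hμψ : ∀ (x : E) (r : ℝ), 0 ≤ r → μ (ball x r) ≤ ENNReal.ofReal (ψ r))
    (N : ℕ) (hN : 1 ≤ N)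
    (D : Finset E) (hDcard : D.card = N) (hνD : ν ((↑D : Set E)ᶜ) = 0)
    (p : ℝ) (hp : 1 ≤ p)
    (π : Measure (E × E)) [IsProbabilityMeasure π]
    (hπ1 : π.map Prod.fst = ν) (hπ2 : π.map Prod.snd = μ)
    (r : ℝ) (hr : 0 ≤ r) (hrψ : ψ r ≤ 1 / (2 * N)) :
    ENNReal.ofReal (r ^ p / 2) ≤ ∫⁻ z, ENNReal.ofReal (dist z.1 z.2 ^ p) ∂π := by
  have hp0 : (0:ℝ) ≤ p := le_trans zero_le_one hp
  set U : Set E := ⋃ x ∈ D, ball x r with hU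
  have hUmeas : MeasurableSet U := by
    apply MeasurableSet.biUnion D.countable_toSet
    intro x _
    exact measurableSet_ball
  have hUbound : μ U ≤ 1 / 2 := by
    calc μ U ≤ ∑ x ∈ D, μ (ball x r) := measure_biUnion_finset_le D _
      _ ≤ ∑ x ∈ D, ENNReal.ofReal (ψ r) := by
          exact Finset.sum_le_sum fun x _ => hμψ x r hr
      _ = N * ENNReal.ofReal (ψ r) := by
          rw [Finset.sum_const, hDcard, nsmul_eq_mul]
      _ ≤ N * ENNReal.ofReal (1 / (2 * N)) := by
          exact mul_le_mul_right (ENNReal.ofReal_le_ofReal hrψ) _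
      _ = ENNReal.ofReal (N * (1 / (2 * N))) := by
          rw [ENNReal.ofReal_mul (by positivity), ENNReal.ofReal_natCast]
      _ = ENNReal.ofReal (1 / 2) := by
          congr 1
          have hN0 : (N:ℝ) ≠ 0 := by positivity
          field_simp
      _ = 1 / 2 := by
          rw [ENNReal.ofReal_div_of_pos (by norm_num)]
          simp
  set S : Set (E × E) := ⋃ x ∈ D, ({x} ×ˢ (ball x r)ᶜ) with hS
  have hSmeas : MeasurableSet S := by
    apply MeasurableSet.biUnion D.countable_toSet
    intro x _
    exact (measurableSet_singleton x).prod measurableSet_ball.compl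
  have hSdist : ∀ z ∈ S, r ≤ dist z.1 z.2 := by
    intro z hz
    simp only [hS, mem_iUnion, mem_prod, mem_singleton_iff, mem_compl_iff, mem_ball] at hz
    obtain ⟨x, _, h1, h2⟩ := hz
    rw [h1, dist_comm]
    exact not_lt.mp h2
  have hDmeas : MeasurableSet ((↑D : Set E)ᶜ) := (D.finite_toSet.measurableSet).compl
  have hfst : π (Prod.fst ⁻¹' ((↑D : Set E)ᶜ)) = 0 := by
    have h := Measure.map_apply (measurable_fst (α := E) (β := E)) hDmeas (μ := π)
    rw [hπ1] at h
    rw [← h, hνD]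
  have hsnd : π (Prod.snd ⁻¹' U) = μ U := by
    have h := Measure.map_apply (measurable_snd (α := E) (β := E)) hUmeas (μ := π)
    rw [hπ2] at h
    rw [← h]
  have hScompl : Sᶜ ⊆ (Prod.fst ⁻¹' ((↑D : Set E)ᶜ)) ∪ (Prod.snd ⁻¹' U) := by
    intro z hz
    by_cases hzD : z.1 ∈ (↑D : Set E)
    · right
      simp only [hS, mem_compl_iff, mem_iUnion, mem_prod, mem_singleton_iff,
        mem_compl_iff, mem_ball, not_exists, not_and, not_not] at hz
      have := hz z.1 hzD rfl
      simp only [hU, mem_preimage, mem_iUnion, mem_ball]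
      exact ⟨z.1, hzD, this⟩
    · left; exact hzD
  have hSc : π Sᶜ ≤ 1 / 2 := by
    calc π Sᶜ ≤ π ((Prod.fst ⁻¹' ((↑D : Set E)ᶜ)) ∪ (Prod.snd ⁻¹' U)) :=
          measure_mono hScompl
      _ ≤ π (Prod.fst ⁻¹' ((↑D : Set E)ᶜ)) + π (Prod.snd ⁻¹' U) := measure_union_le _ _
      _ = μ U := by rw [hfst, hsnd, zero_add]
      _ ≤ 1 / 2 := hUbound
  have hπS : 1 / 2 ≤ π S := by
    have h1 : π S + π Sᶜ = 1 := (measure_add_measure_compl hSmeas).trans measure_univ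
    have h2 : (1:ENNReal) ≤ π S + 1/2 := by
      have h := add_le_add (le_refl (π S)) hSc
      rw [h1] at h
      exact h
    have h3 : (1:ENNReal) - 1/2 ≤ π S := tsub_le_iff_right.mpr h2
    calc (1:ENNReal)/2 = 1 - 1/2 := by
          exact (ENNReal.sub_half ENNReal.one_ne_top).symm
      _ ≤ π S := h3
  calc ENNReal.ofReal (r ^ p / 2) = ENNReal.ofReal (r ^ p) * (1 / 2) := by
        rw [ENNReal.ofReal_div_of_pos (by norm_num), mul_one_div]
        norm_num
    _ ≤ ENNReal.ofReal (r ^ p) * π S := by gcongr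
    _ = ∫⁻ z, S.indicator (fun _ => ENNReal.ofReal (r ^ p)) z ∂π :=
        (lintegral_indicator_const hSmeas _).symm
    _ ≤ ∫⁻ z, ENNReal.ofReal (dist z.1 z.2 ^ p) ∂π := by
        apply lintegral_mono
        intro z
        by_cases hz : z ∈ S
        · rw [indicator_of_mem hz]
          exact ENNReal.ofReal_le_ofReal (Real.rpow_le_rpow hr (hSdist z hz) hp0)
        · rw [indicator_of_notMem hz]
          exact zero_le
end

section
/- Let p > 1 and define θ : [0,1] → [0,1] by θ(s) = 2^{p−1} s^p for s ∈ [0, 1/2] and θ(s) = 1 − 2^{p−1}(1−s)^p for s ∈ (1/2, 1]. Then θ is differentiable on (0,1) with θ'(s) = p 2^{p−1} (min{s, 1−s})^{p−1}, and min{θ(s), 1−θ(s)} = 2^{p−1} (min{s, 1−s})^p for all s ∈ [0,1]; consequently ∫₀¹ θ'(s)^p / (min{θ(s), 1−θ(s)})^{p−1} ds = p^p 2^{p−1}. -/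
open Real Set MeasureTheory

lemma derivL (p : ℝ) (hp : 1 < p) (x : ℝ) :
    HasDerivAt (fun s : ℝ => 2 ^ (p - 1) * s ^ p) (p * 2 ^ (p - 1) * x ^ (p - 1)) x := by
  have h := (Real.hasDerivAt_rpow_const (x := x) (p := p) (Or.inr hp.le)).const_mul (2 ^ (p - 1))
  exact h.congr_deriv (by ring)

lemma derivR (p : ℝ) (hp : 1 < p) (x : ℝ) :
    HasDerivAt (fun s : ℝ => 1 - 2 ^ (p - 1) * (1 - s) ^ p)
      (p * 2 ^ (p - 1) * (1 - x) ^ (p - 1)) x := by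
  have h1 : HasDerivAt (fun s : ℝ => 1 - s) (-1) x := by
    simpa using (hasDerivAt_id x).const_sub 1
  have h2 := (Real.hasDerivAt_rpow_const (x := 1 - x) (p := p) (Or.inr hp.le)).comp x h1
  have h3 := (h2.const_mul (2 ^ (p - 1))).const_sub 1
  exact h3.congr_deriv (by ring)

lemma key (p : ℝ) : (2:ℝ) ^ (p - 1) * (1/2 : ℝ) ^ p = 1/2 := by
  have : ((1:ℝ)/2) ^ p = (2:ℝ) ^ (-p) := by
    rw [Real.rpow_neg (by norm_num), ← Real.inv_rpow (by norm_num)]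
    norm_num
  rw [this, ← Real.rpow_add (by norm_num)]
  have h : p - 1 + -p = -1 := by ring
  rw [h, Real.rpow_neg_one]
  norm_num

lemma alg (p : ℝ) (hp : 1 < p) (m : ℝ) (hm : 0 < m) :
    (p * 2 ^ (p - 1) * m ^ (p - 1)) ^ p / (2 ^ (p - 1) * m ^ p) ^ (p - 1)
      = p ^ p * 2 ^ (p - 1) := by
  have hp0 : (0:ℝ) < p := lt_trans one_pos hp
  have h2 : (0:ℝ) < (2:ℝ) ^ (p - 1) := Real.rpow_pos_of_pos (by norm_num) _
  rw [Real.mul_rpow (by positivity) (by positivity),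
      Real.mul_rpow hp0.le h2.le,
      Real.mul_rpow h2.le (by positivity),
      ← Real.rpow_mul hm.le, ← Real.rpow_mul hm.le,
      ← Real.rpow_mul (by norm_num : (0:ℝ) ≤ 2), ← Real.rpow_mul (by norm_num : (0:ℝ) ≤ 2)]
  have hmm : m ^ (p * (p - 1)) = m ^ ((p - 1) * p) := by rw [mul_comm]
  rw [hmm]
  have e2 : (2:ℝ) ^ ((p - 1) * p) = 2 ^ ((p - 1) * (p - 1)) * 2 ^ (p - 1) := by
    rw [← Real.rpow_add (by norm_num : (0:ℝ) < 2)]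
    congr 1; ring
  rw [e2]
  have hm2 : m ^ ((p - 1) * p) ≠ 0 := (Real.rpow_pos_of_pos hm _).ne'
  have h22 : (2:ℝ) ^ ((p - 1) * (p - 1)) ≠ 0 := (Real.rpow_pos_of_pos (by norm_num) _).ne'
  field_simp

lemma deriv_all (p : ℝ) (hp : 1 < p) (θ : ℝ → ℝ)
    (hθ : ∀ s : ℝ, θ s = if s ≤ 1 / 2 then 2 ^ (p - 1) * s ^ p
      else 1 - 2 ^ (p - 1) * (1 - s) ^ p) :
    ∀ s ∈ Set.Ioo (0 : ℝ) 1,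
      HasDerivAt θ (p * 2 ^ (p - 1) * (min s (1 - s)) ^ (p - 1)) s := by
  intro s hs
  rcases lt_trichotomy s (1/2) with h | h | h
  · have hmin : min s (1 - s) = s := min_eq_left (by linarith)
    rw [hmin]
    apply (derivL p hp s).congr_of_eventuallyEq
    filter_upwards [Iio_mem_nhds h] with y hy
    rw [hθ y, if_pos (le_of_lt hy)]
  · subst h
    have hmin : min (1/2 : ℝ) (1 - 1/2) = 1/2 := by norm_num
    rw [hmin]
    have hL : HasDerivWithinAt θ (p * 2 ^ (p - 1) * (1/2 : ℝ) ^ (p - 1)) (Iic (1/2)) (1/2) := by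
      apply ((derivL p hp (1/2)).hasDerivWithinAt).congr
      · intro y hy; rw [hθ y, if_pos (mem_Iic.mp hy)]
      · rw [hθ, if_pos le_rfl]
    have hR : HasDerivWithinAt θ (p * 2 ^ (p - 1) * (1/2 : ℝ) ^ (p - 1)) (Ici (1/2)) (1/2) := by
      have h' := (derivR p hp (1/2)).hasDerivWithinAt (s := Ici (1/2))
      norm_num at h'
      apply h'.congr
      · intro y hy
        rcases eq_or_lt_of_le (mem_Ici.mp hy) with hy' | hy'
        · rw [hθ y, ← hy', if_pos le_rfl]
          have := key p
          norm_num at this ⊢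
          linarith
        · rw [hθ y, if_neg (not_le.mpr hy')]
      · rw [hθ, if_pos le_rfl]
        have := key p
        norm_num at this ⊢
        linarith
    have := hL.union hR
    rw [Iic_union_Ici] at this
    exact hasDerivWithinAt_univ.mp this
  · have hmin : min s (1 - s) = 1 - s := min_eq_right (by linarith)
    rw [hmin]
    apply (derivR p hp s).congr_of_eventuallyEq
    filter_upwards [Ioi_mem_nhds h] with y hy
    rw [hθ y, if_neg (not_le.mpr hy)]

lemma min_all (p : ℝ) (hp : 1 < p) (θ : ℝ → ℝ)
    (hθ : ∀ s : ℝ, θ s = if s ≤ 1 / 2 then 2 ^ (p - 1) * s ^ p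
      else 1 - 2 ^ (p - 1) * (1 - s) ^ p) :
    ∀ s ∈ Set.Icc (0 : ℝ) 1,
      min (θ s) (1 - θ s) = 2 ^ (p - 1) * (min s (1 - s)) ^ p := by
  intro s hs
  obtain ⟨hs0, hs1⟩ := hs
  have h2 : (0:ℝ) < (2:ℝ) ^ (p - 1) := Real.rpow_pos_of_pos (by norm_num) _
  by_cases h : s ≤ 1/2
  · have hmin : min s (1 - s) = s := min_eq_left (by linarith)
    rw [hmin, hθ s, if_pos h]
    have h1 : s ^ p ≤ (1/2 : ℝ) ^ p := Real.rpow_le_rpow hs0 h (by positivity)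
    have h3 : 2 ^ (p - 1) * s ^ p ≤ 1/2 := by
      calc 2 ^ (p - 1) * s ^ p ≤ 2 ^ (p - 1) * (1/2 : ℝ) ^ p :=
            mul_le_mul_of_nonneg_left h1 h2.le
        _ = 1/2 := key p
    exact min_eq_left (by linarith)
  · push_neg at h
    have hmin : min s (1 - s) = 1 - s := min_eq_right (by linarith)
    rw [hmin, hθ s, if_neg (not_le.mpr h)]
    have h1 : (1 - s) ^ p ≤ (1/2 : ℝ) ^ p :=
      Real.rpow_le_rpow (by linarith) (by linarith) (by positivity)
    have h3 : 2 ^ (p - 1) * (1 - s) ^ p ≤ 1/2 := by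
      calc 2 ^ (p - 1) * (1 - s) ^ p ≤ 2 ^ (p - 1) * (1/2 : ℝ) ^ p :=
            mul_le_mul_of_nonneg_left h1 h2.le
        _ = 1/2 := key p
    have hx : 1 - (1 - 2 ^ (p - 1) * (1 - s) ^ p) = 2 ^ (p - 1) * (1 - s) ^ p := by ring
    rw [hx, min_eq_right (by linarith)]

/-- properties of the symmetric reparametrization
`θ(s) = 2^{p-1} s^p` on `[0,1/2]`, `θ(s) = 1 - 2^{p-1}(1-s)^p` on `(1/2,1]`. -/
theorem stmt_2 (p : ℝ) (hp : 1 < p)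
    (θ : ℝ → ℝ)
    (hθ : ∀ s : ℝ, θ s = if s ≤ 1 / 2 then 2 ^ (p - 1) * s ^ p
      else 1 - 2 ^ (p - 1) * (1 - s) ^ p) :
    (∀ s ∈ Set.Ioo (0 : ℝ) 1,
      HasDerivAt θ (p * 2 ^ (p - 1) * (min s (1 - s)) ^ (p - 1)) s) ∧
    (∀ s ∈ Set.Icc (0 : ℝ) 1,
      min (θ s) (1 - θ s) = 2 ^ (p - 1) * (min s (1 - s)) ^ p) ∧
    (∫ s in (0 : ℝ)..1, (deriv θ s) ^ p / (min (θ s) (1 - θ s)) ^ (p - 1))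
      = p ^ p * 2 ^ (p - 1) := by
  refine ⟨deriv_all p hp θ hθ, min_all p hp θ hθ, ?_⟩
  rw [intervalIntegral.integral_of_le (by norm_num : (0:ℝ) ≤ 1),
      MeasureTheory.integral_Ioc_eq_integral_Ioo]
  rw [MeasureTheory.setIntegral_congr_fun measurableSet_Ioo
    (g := fun _ : ℝ => p ^ p * 2 ^ (p - 1)) ?_]
  · simp [Real.volume_Ioo]
  · intro s hs
    obtain ⟨hs0, hs1⟩ := hs
    have hd := (deriv_all p hp θ hθ s ⟨hs0, hs1⟩).deriv
    have hm : 0 < min s (1 - s) := lt_min hs0 (by linarith)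
    simp only
    rw [hd, min_all p hp θ hθ s ⟨hs0.le, hs1.le⟩]
    exact alg p hp _ hm
end

section
/- Let θ > 0 and τ > 1/2. There exists a constant c₃ > 0 such that for every x ∈ ℝⁿ with |x| ≥ 1 and every r ∈ (0,1], (1 + θ(|x| − r/4)²)^τ ≤ (1 + θ|x|²)^τ − c₃ r |x|^{2τ−1}. -/
set_option maxHeartbeats 1000000

/-- Unified convexity/concavity lower bound:
for `0 < p`, `0 < b ≤ a`, we have `p * min (a^(p-1)) (b^(p-1)) * (a-b) ≤ a^p - b^p`. -/
lemma aux_rpow_sub (p a b : ℝ) (hp : 0 < p) (hb : 0 < b) (hba : b ≤ a) :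
    p * min (a ^ (p - 1)) (b ^ (p - 1)) * (a - b) ≤ a ^ p - b ^ p := by
  have ha : 0 < a := hb.trans_le hba
  rcases le_total 1 p with h1 | h1
  · -- convex case: min is b^(p-1)
    have hmin : min (a ^ (p - 1)) (b ^ (p - 1)) = b ^ (p - 1) :=
      min_eq_right (Real.rpow_le_rpow hb.le hba (by linarith))
    rw [hmin]
    have hs : -1 ≤ (a - b) / b :=
      le_trans (by norm_num) (div_nonneg (by linarith) hb.le)
    have hB := one_add_mul_self_le_rpow_one_add hs h1
    have h1s : (1 : ℝ) + (a - b) / b = a / b := by field_simp; ring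
    rw [h1s, Real.div_rpow ha.le hb.le] at hB
    have hbp : 0 < b ^ p := Real.rpow_pos_of_pos hb p
    rw [le_div_iff₀ hbp] at hB
    have hkey : (1 + p * ((a - b) / b)) * b ^ p = b ^ p + p * b ^ (p - 1) * (a - b) := by
      have h2 : b ^ p = b ^ (p - 1) * b := by
        rw [← Real.rpow_add_one hb.ne' (p - 1)]; ring_nf
      rw [h2]; field_simp
    rw [hkey] at hB
    linarith
  · -- concave case: min is a^(p-1)
    have hmin : min (a ^ (p - 1)) (b ^ (p - 1)) = a ^ (p - 1) := by
      apply min_eq_left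
      exact Real.rpow_le_rpow_of_nonpos hb hba (by linarith)
    rw [hmin]
    have hs : -1 ≤ (b - a) / a := by
      rw [le_div_iff₀ ha]; linarith
    have hB := rpow_one_add_le_one_add_mul_self hs hp.le h1
    have h1s : (1 : ℝ) + (b - a) / a = b / a := by field_simp; ring
    rw [h1s, Real.div_rpow hb.le ha.le] at hB
    have hap : 0 < a ^ p := Real.rpow_pos_of_pos ha p
    rw [div_le_iff₀ hap] at hB
    have hkey : (1 + p * ((b - a) / a)) * a ^ p = a ^ p - p * a ^ (p - 1) * (a - b) := by
      have h2 : a ^ p = a ^ (p - 1) * a := by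
        rw [← Real.rpow_add_one ha.ne' (p - 1)]; ring_nf
      rw [h2]; field_simp; ring
    rw [hkey] at hB
    linarith

/-- Real-variable version of the main statement. -/
lemma aux_main (θ τ : ℝ) (hθ : 0 < θ) (hτ0 : 0 < τ) :
    ∃ c₃ > (0 : ℝ), ∀ s : ℝ, 1 ≤ s → ∀ r : ℝ, 0 < r → r ≤ 1 →
      (1 + θ * (s - r / 4) ^ 2) ^ τ
        ≤ (1 + θ * s ^ 2) ^ τ - c₃ * r * s ^ (2 * τ - 1) := by
  set K : ℝ := min ((9 * θ / 16) ^ (τ - 1)) ((1 + θ) ^ (τ - 1)) with hK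
  have hK0 : 0 < K := lt_min (Real.rpow_pos_of_pos (by linarith) _)
    (Real.rpow_pos_of_pos (by linarith) _)
  refine ⟨τ * K * θ * (7 / 16), by positivity, ?_⟩
  intro s hx r hr0 hr1
  have hs0 : (0 : ℝ) < s := lt_of_lt_of_le one_pos hx
  set a : ℝ := 1 + θ * s ^ 2 with hadef
  set b : ℝ := 1 + θ * (s - r / 4) ^ 2 with hbdef
  have hsr : 0 ≤ s - r / 4 := by linarith
  have hb0 : 0 < b := by positivity
  have hba : b ≤ a := by
    have h2 : (s - r / 4) ^ 2 ≤ s ^ 2 := by nlinarith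
    simp only [hadef, hbdef]; nlinarith
  have hmain := aux_rpow_sub τ a b hτ0 hb0 hba
  have hpow : ∀ c : ℝ, 0 < c → (c * s ^ 2) ^ (τ - 1) = c ^ (τ - 1) * s ^ (2 * (τ - 1)) := by
    intro c hc
    rw [Real.mul_rpow hc.le (by positivity), ← Real.rpow_natCast s 2,
      ← Real.rpow_mul hs0.le]
    norm_num
  have hminge : K * s ^ (2 * (τ - 1)) ≤ min (a ^ (τ - 1)) (b ^ (τ - 1)) := by
    rcases le_total 1 τ with h1 | h1
    · -- min = b^(τ-1); b ≥ (9θ/16) s²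
      have hblow : 9 * θ / 16 * s ^ 2 ≤ b := by
        have h34 : 3 / 4 * s ≤ s - r / 4 := by linarith
        have h2 : (3 / 4 * s) ^ 2 ≤ (s - r / 4) ^ 2 := by nlinarith
        simp only [hbdef]; nlinarith
      have h1' : (9 * θ / 16 * s ^ 2) ^ (τ - 1) ≤ b ^ (τ - 1) :=
        Real.rpow_le_rpow (by positivity) hblow (by linarith)
      rw [hpow _ (by positivity)] at h1'
      have h2' : (9 * θ / 16 * s ^ 2) ^ (τ - 1) ≤ a ^ (τ - 1) :=
        Real.rpow_le_rpow (by positivity) (hblow.trans hba) (by linarith)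
      rw [hpow _ (by positivity)] at h2'
      have hKle : K ≤ (9 * θ / 16) ^ (τ - 1) := min_le_left _ _
      have hsp : 0 ≤ s ^ (2 * (τ - 1)) := (Real.rpow_pos_of_pos hs0 _).le
      exact le_min (le_trans (mul_le_mul_of_nonneg_right hKle hsp) h2')
        (le_trans (mul_le_mul_of_nonneg_right hKle hsp) h1')
    · -- min includes a^(τ-1); a ≤ (1+θ) s²
      have haup : a ≤ (1 + θ) * s ^ 2 := by
        have h2 : (1 : ℝ) ≤ s ^ 2 := by nlinarith
        simp only [hadef]; nlinarith
      have h1' : ((1 + θ) * s ^ 2) ^ (τ - 1) ≤ a ^ (τ - 1) :=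
        Real.rpow_le_rpow_of_nonpos (by positivity) haup (by linarith)
      rw [hpow _ (by positivity)] at h1'
      have h2' : ((1 + θ) * s ^ 2) ^ (τ - 1) ≤ b ^ (τ - 1) :=
        Real.rpow_le_rpow_of_nonpos hb0 (hba.trans haup) (by linarith)
      rw [hpow _ (by positivity)] at h2'
      have hKle : K ≤ (1 + θ) ^ (τ - 1) := min_le_right _ _
      have hsp : 0 ≤ s ^ (2 * (τ - 1)) := (Real.rpow_pos_of_pos hs0 _).le
      exact le_min (le_trans (mul_le_mul_of_nonneg_right hKle hsp) h1')
        (le_trans (mul_le_mul_of_nonneg_right hKle hsp) h2')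
  -- Lower bound on a - b
  have hab : θ * (7 / 16) * r * s ≤ a - b := by
    have heq : a - b = θ * (r / 4) * (2 * s - r / 4) := by
      simp only [hadef, hbdef]; ring
    rw [heq]
    have h7 : 7 / 4 * s ≤ 2 * s - r / 4 := by linarith
    calc θ * (7 / 16) * r * s = θ * (r / 4) * (7 / 4 * s) := by ring
      _ ≤ θ * (r / 4) * (2 * s - r / 4) :=
          mul_le_mul_of_nonneg_left h7 (by positivity)
  -- Combine
  have hcomb : τ * (K * s ^ (2 * (τ - 1))) * (θ * (7 / 16) * r * s) ≤ a ^ τ - b ^ τ := by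
    refine le_trans ?_ hmain
    have hm0 : 0 ≤ τ * (K * s ^ (2 * (τ - 1))) := by positivity
    calc τ * (K * s ^ (2 * (τ - 1))) * (θ * (7 / 16) * r * s)
        ≤ τ * (K * s ^ (2 * (τ - 1))) * (a - b) := mul_le_mul_of_nonneg_left hab hm0
      _ ≤ τ * min (a ^ (τ - 1)) (b ^ (τ - 1)) * (a - b) := by
          apply mul_le_mul_of_nonneg_right _ (by linarith)
          exact mul_le_mul_of_nonneg_left hminge (le_of_lt hτ0)
  have hspow : s ^ (2 * (τ - 1)) * s = s ^ (2 * τ - 1) := by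
    rw [← Real.rpow_add_one hs0.ne' (2 * (τ - 1))]
    ring_nf
  have hfin : τ * K * θ * (7 / 16) * r * s ^ (2 * τ - 1) ≤ a ^ τ - b ^ τ := by
    calc τ * K * θ * (7 / 16) * r * s ^ (2 * τ - 1)
        = τ * (K * s ^ (2 * (τ - 1))) * (θ * (7 / 16) * r * s) := by
          rw [← hspow]; ring
      _ ≤ a ^ τ - b ^ τ := hcomb
  linarith

/-- for `|x| ≥ 1` and `r ∈ (0,1]`,
`(1 + θ(|x| - r/4)²)^τ ≤ (1 + θ|x|²)^τ - c₃ r |x|^{2τ-1}`. -/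
theorem stmt_4 (n : ℕ) (θ τ : ℝ) (hθ : 0 < θ) (hτ : 1 / 2 < τ) :
    ∃ c₃ > (0 : ℝ), ∀ x : EuclideanSpace ℝ (Fin n), 1 ≤ ‖x‖ →
      ∀ r ∈ Set.Ioc (0 : ℝ) 1,
        (1 + θ * (‖x‖ - r / 4) ^ 2) ^ τ
          ≤ (1 + θ * ‖x‖ ^ 2) ^ τ - c₃ * r * ‖x‖ ^ (2 * τ - 1) := by
  obtain ⟨c₃, hc₃, h⟩ := aux_main θ τ hθ (by linarith)
  exact ⟨c₃, hc₃, fun x hx r hr => h ‖x‖ hx r hr.1 hr.2⟩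
end

section
/- Let n ≥ 1, θ > 0 and τ > 1/2, and let ν be the measure on ℝⁿ with density e^{−(1+θ|y|²)^τ} with respect to Lebesgue measure. There exist constants c > 0 and c₃ > 0 such that for every x ∈ ℝⁿ with |x| ≥ 1 and every r ∈ (0,1], ν(B(x,r)) ≥ c rⁿ exp( −(1 + θ|x|²)^τ + c₃ r |x|^{2τ−1} ). -/
open MeasureTheory

lemma stmt5_key (θ τ : ℝ) (hθ : 0 < θ) (hτ : 1 / 2 < τ) :
    ∃ c₃ > (0 : ℝ), ∀ M : ℝ, 1 ≤ M → ∀ r : ℝ, 0 < r → r ≤ 1 →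
      (1 + θ * (M - r / 2) ^ 2) ^ τ + c₃ * r * M ^ (2 * τ - 1)
        ≤ (1 + θ * M ^ 2) ^ τ := by
  have hτ0 : 0 < τ := by linarith
  set K : ℝ := min ((θ / 4) ^ (τ - 1)) ((1 + θ) ^ (τ - 1)) with hKdef
  have hK : 0 < K :=
    lt_min (Real.rpow_pos_of_pos (by linarith) _) (Real.rpow_pos_of_pos (by linarith) _)
  refine ⟨θ * τ * K / 2, by positivity, ?_⟩
  intro M hM r hr hr1
  have hMpos : (0 : ℝ) < M := by linarith
  have hab : M - r / 2 < M := by linarith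
  have hpos : ∀ s : ℝ, (0 : ℝ) < 1 + θ * s ^ 2 := fun s => by positivity
  set f : ℝ → ℝ := fun s => (1 + θ * s ^ 2) ^ τ with hf
  have hderiv : ∀ s : ℝ,
      HasDerivAt f (θ * (2 * s) * τ * (1 + θ * s ^ 2) ^ (τ - 1)) s := by
    intro s
    have h1 : HasDerivAt (fun s : ℝ => 1 + θ * s ^ 2) (θ * (2 * s)) s := by
      simpa using ((hasDerivAt_pow 2 s).const_mul θ).const_add 1
    exact h1.rpow_const (Or.inl (hpos s).ne')
  have hcont : ContinuousOn f (Set.Icc (M - r / 2) M) :=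
    (Continuous.rpow_const (by continuity) fun s => Or.inl (hpos s).ne').continuousOn
  obtain ⟨ξ, hξ, hslope⟩ :=
    exists_hasDerivAt_eq_slope f _ hab hcont (fun y _ => hderiv y)
  have hξ1 : M / 2 ≤ ξ := by
    have := hξ.1; linarith
  have hξ2 : ξ ≤ M := hξ.2.le
  have hξ0 : 0 < ξ := by linarith
  -- key bound on (1+θξ²)^(τ-1)
  have hstep : K * (M ^ 2) ^ (τ - 1) ≤ (1 + θ * ξ ^ 2) ^ (τ - 1) := by
    rcases le_or_gt 1 τ with h1 | h1
    · calc K * (M ^ 2) ^ (τ - 1)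
          ≤ (θ / 4) ^ (τ - 1) * (M ^ 2) ^ (τ - 1) :=
            mul_le_mul_of_nonneg_right (min_le_left _ _) (Real.rpow_nonneg (by positivity) _)
        _ = (θ / 4 * M ^ 2) ^ (τ - 1) := (Real.mul_rpow (by positivity) (by positivity)).symm
        _ ≤ (1 + θ * ξ ^ 2) ^ (τ - 1) :=
            Real.rpow_le_rpow (by positivity)
              (by
                have h4 : M / 2 * (M / 2) ≤ ξ * ξ :=
                  mul_le_mul hξ1 hξ1 (by positivity) hξ0.le
                nlinarith [mul_le_mul_of_nonneg_left h4 hθ.le]) (by linarith)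
    · calc K * (M ^ 2) ^ (τ - 1)
          ≤ (1 + θ) ^ (τ - 1) * (M ^ 2) ^ (τ - 1) :=
            mul_le_mul_of_nonneg_right (min_le_right _ _) (Real.rpow_nonneg (by positivity) _)
        _ = ((1 + θ) * M ^ 2) ^ (τ - 1) := (Real.mul_rpow (by positivity) (by positivity)).symm
        _ ≤ (1 + θ * ξ ^ 2) ^ (τ - 1) :=
            Real.rpow_le_rpow_of_nonpos (hpos ξ)
              (by
                have h4 : ξ ^ 2 ≤ M ^ 2 := pow_le_pow_left₀ hξ0.le hξ2 2
                have hM2 : 1 ≤ M ^ 2 := by nlinarith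
                nlinarith [mul_le_mul_of_nonneg_left h4 hθ.le]) (by linarith)
  have hMM : M ^ (2 * τ - 1) = M * (M ^ 2) ^ (τ - 1) := by
    have h2 : ((M : ℝ) ^ 2) ^ (τ - 1) = M ^ (2 * (τ - 1)) := by
      rw [← Real.rpow_natCast M 2, ← Real.rpow_mul hMpos.le]
      norm_num
    rw [h2, ← Real.rpow_one_add' hMpos.le (by intro h; nlinarith)]
    ring_nf
  -- lower bound for the derivative at ξ
  have hderiv_lb : θ * τ * K * M ^ (2 * τ - 1)
      ≤ θ * (2 * ξ) * τ * (1 + θ * ξ ^ 2) ^ (τ - 1) := by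
    rw [hMM]
    have hB : 0 ≤ K * (M ^ 2) ^ (τ - 1) := by positivity
    have hmul : M * (K * (M ^ 2) ^ (τ - 1)) ≤ (2 * ξ) * ((1 + θ * ξ ^ 2) ^ (τ - 1)) :=
      mul_le_mul (by linarith) hstep hB (by linarith)
    nlinarith [mul_le_mul_of_nonneg_left hmul (by positivity : (0:ℝ) ≤ θ * τ)]
  have hba : M - (M - r / 2) = r / 2 := by ring
  rw [hba] at hslope
  have hdiff : f M - f (M - r / 2)
      = θ * (2 * ξ) * τ * (1 + θ * ξ ^ 2) ^ (τ - 1) * (r / 2) := by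
    rw [hslope]; field_simp
  have : θ * τ * K * M ^ (2 * τ - 1) * (r / 2)
      ≤ θ * (2 * ξ) * τ * (1 + θ * ξ ^ 2) ^ (τ - 1) * (r / 2) :=
    mul_le_mul_of_nonneg_right hderiv_lb (by positivity)
  have hfin : f (M - r / 2) + θ * τ * K / 2 * r * M ^ (2 * τ - 1) ≤ f M := by
    nlinarith [this, hdiff]
  simpa only [hf] using hfin

/-- lower bound for the mass of balls under the measure with density
`e^{-(1+θ|y|²)^τ}` with respect to Lebesgue measure on `ℝⁿ`. -/
theorem stmt_5 (n : ℕ) (hn : 1 ≤ n) (θ τ : ℝ) (hθ : 0 < θ) (hτ : 1 / 2 < τ) :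
    ∃ c > (0 : ℝ), ∃ c₃ > (0 : ℝ), ∀ x : EuclideanSpace ℝ (Fin n), 1 ≤ ‖x‖ →
      ∀ r ∈ Set.Ioc (0 : ℝ) 1,
        ENNReal.ofReal
            (c * r ^ n *
              Real.exp (-(1 + θ * ‖x‖ ^ 2) ^ τ + c₃ * r * ‖x‖ ^ (2 * τ - 1)))
          ≤ (volume.withDensity
              (fun y => ENNReal.ofReal (Real.exp (-(1 + θ * ‖y‖ ^ 2) ^ τ))))
              (Metric.ball x r) := by
  obtain ⟨c₃, hc₃, hkey⟩ := stmt5_key θ τ hθ hτ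
  have hτ0 : 0 < τ := by linarith
  haveI : Nontrivial (EuclideanSpace ℝ (Fin n)) :=
    Module.nontrivial_of_finrank_pos (R := ℝ)
      (by rw [finrank_euclideanSpace_fin]; exact hn)
  set V := volume (Metric.ball (0 : EuclideanSpace ℝ (Fin n)) 1) with hV
  have hV0 : 0 < V := Metric.measure_ball_pos _ _ one_pos
  have hVtop : V ≠ ⊤ := measure_ball_lt_top.ne
  have hVt : 0 < V.toReal := ENNReal.toReal_pos hV0.ne' hVtop
  refine ⟨(1 / 4) ^ n * V.toReal, by positivity, c₃, hc₃, ?_⟩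
  intro x hx r hr
  obtain ⟨hr0, hr1⟩ := hr
  set M := ‖x‖ with hMdef
  have hM1 : (1 : ℝ) ≤ M := hx
  have hMpos : (0 : ℝ) < M := by linarith
  set t : ℝ := 3 * r / (4 * M) with ht
  have ht0 : 0 ≤ t := by positivity
  have ht1 : t ≤ 3 / 4 := by
    rw [ht, div_le_iff₀ (by positivity)]; nlinarith
  set x' : EuclideanSpace ℝ (Fin n) := (1 - t) • x with hx'
  have htM : t * M = 3 * r / 4 := by
    rw [ht]; field_simp
  have hnx' : ‖x'‖ = M - 3 * r / 4 := by
    rw [hx', norm_smul, Real.norm_eq_abs, abs_of_nonneg (by linarith), ← hMdef]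
    nlinarith [htM]
  have hxx' : ‖x - x'‖ = 3 * r / 4 := by
    have hxe : x - x' = t • x := by rw [hx']; module
    rw [hxe, norm_smul, Real.norm_eq_abs, abs_of_nonneg ht0, ← hMdef, htM]
  have hsub : Metric.ball x' (r / 4) ⊆ Metric.ball x r := by
    intro y hy
    rw [Metric.mem_ball, dist_eq_norm] at hy ⊢
    calc ‖y - x‖ = ‖(y - x') + (x' - x)‖ := by rw [sub_add_sub_cancel]
      _ ≤ ‖y - x'‖ + ‖x' - x‖ := norm_add_le _ _
      _ < r / 4 + 3 * r / 4 := by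
          rw [norm_sub_rev x' x, hxx']
          exact add_lt_add_of_lt_of_le hy le_rfl
      _ = r := by ring
  -- bound on points of the small ball
  have hnorm_y : ∀ y ∈ Metric.ball x' (r / 4), ‖y‖ ≤ M - r / 2 := by
    intro y hy
    rw [Metric.mem_ball, dist_eq_norm] at hy
    have h5 : ‖y‖ ≤ ‖x'‖ + ‖y - x'‖ := by
      simpa using norm_add_le x' (y - x')
    rw [hnx'] at h5; linarith
  set E : ℝ := Real.exp (-(1 + θ * (M - r / 2) ^ 2) ^ τ) with hE
  have hdens : ∀ y ∈ Metric.ball x' (r / 4),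
      ENNReal.ofReal E ≤ ENNReal.ofReal (Real.exp (-(1 + θ * ‖y‖ ^ 2) ^ τ)) := by
    intro y hy
    apply ENNReal.ofReal_le_ofReal
    apply Real.exp_le_exp.2
    apply neg_le_neg
    apply Real.rpow_le_rpow (by positivity) ?_ hτ0.le
    have h6 : ‖y‖ ^ 2 ≤ (M - r / 2) ^ 2 :=
      pow_le_pow_left₀ (norm_nonneg y) (hnorm_y y hy) 2
    nlinarith [h6]
  have hgm : Measurable
      (fun y : EuclideanSpace ℝ (Fin n) =>
        ENNReal.ofReal (Real.exp (-(1 + θ * ‖y‖ ^ 2) ^ τ))) := by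
    apply Continuous.measurable
    have hbase : Continuous
        (fun y : EuclideanSpace ℝ (Fin n) => 1 + θ * ‖y‖ ^ 2) :=
      continuous_const.add (continuous_const.mul (continuous_norm.pow 2))
    exact ENNReal.continuous_ofReal.comp (Real.continuous_exp.comp
      ((hbase.rpow_const (fun y => Or.inr hτ0.le)).neg))
  have hvol : volume (Metric.ball x' (r / 4)) = ENNReal.ofReal ((r / 4) ^ n) * V := by
    rw [hV, Measure.addHaar_ball _ _ (by positivity : (0:ℝ) ≤ r / 4),
      finrank_euclideanSpace_fin]
  have hEexp : Real.exp (-(1 + θ * M ^ 2) ^ τ + c₃ * r * M ^ (2 * τ - 1)) ≤ E := by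
    rw [hE]
    apply Real.exp_le_exp.2
    have := hkey M hM1 r hr0 hr1
    linarith
  calc ENNReal.ofReal ((1 / 4) ^ n * V.toReal * r ^ n *
        Real.exp (-(1 + θ * M ^ 2) ^ τ + c₃ * r * M ^ (2 * τ - 1)))
      ≤ ENNReal.ofReal (E * ((r / 4) ^ n * V.toReal)) := by
        apply ENNReal.ofReal_le_ofReal
        have h7 : (1 / 4 : ℝ) ^ n * r ^ n = (r / 4) ^ n := by
          rw [← mul_pow]; ring_nf
        calc (1 / 4) ^ n * V.toReal * r ^ n *
              Real.exp (-(1 + θ * M ^ 2) ^ τ + c₃ * r * M ^ (2 * τ - 1))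
            ≤ (1 / 4) ^ n * V.toReal * r ^ n * E := by
              apply mul_le_mul_of_nonneg_left hEexp (by positivity)
          _ = E * ((r / 4) ^ n * V.toReal) := by rw [← h7]; ring
    _ = ENNReal.ofReal E * (ENNReal.ofReal ((r / 4) ^ n) * ENNReal.ofReal V.toReal) := by
        rw [ENNReal.ofReal_mul (Real.exp_nonneg _), ENNReal.ofReal_mul (by positivity)]
    _ = ENNReal.ofReal E * (ENNReal.ofReal ((r / 4) ^ n) * V) := by
        rw [ENNReal.ofReal_toReal hVtop]
    _ = ENNReal.ofReal E * volume (Metric.ball x' (r / 4)) := by rw [hvol]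
    _ = ∫⁻ _ in Metric.ball x' (r / 4), ENNReal.ofReal E :=
        (setLIntegral_const _ _).symm
    _ ≤ ∫⁻ y in Metric.ball x' (r / 4),
          ENNReal.ofReal (Real.exp (-(1 + θ * ‖y‖ ^ 2) ^ τ)) :=
        setLIntegral_mono hgm hdens
    _ ≤ ∫⁻ y in Metric.ball x r,
          ENNReal.ofReal (Real.exp (-(1 + θ * ‖y‖ ^ 2) ^ τ)) :=
        lintegral_mono_set hsub
    _ = (volume.withDensity
          (fun y => ENNReal.ofReal (Real.exp (-(1 + θ * ‖y‖ ^ 2) ^ τ))))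
          (Metric.ball x r) :=
        (withDensity_apply _ measurableSet_ball).symm
end

section
/- Let n ≥ 1, θ > 0, τ ∈ (1/2, ∞), and let V(x) = ψ(x) + (1 + θ|x|²)^τ on ℝⁿ, where ψ is twice continuously differentiable with bounded first and second derivatives. Then there exists a constant c > 0 such that |∇V(x)|² ≤ c(1 + |x|^{4τ}) for all x ∈ ℝⁿ, and ⟨∇V(x) − ∇V(y), x − y⟩ ≥ −c|x − y|² for all x, y ∈ ℝⁿ. -/
open RealInnerProductSpace

set_option maxHeartbeats 1000000 in
/-- growth of the gradient and semi-convexity of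
`V(x) = ψ(x) + (1+θ|x|²)^τ` with `ψ ∈ C²_b`. -/
theorem stmt_7 (n : ℕ) (hn : 1 ≤ n) (θ τ : ℝ) (hθ : 0 < θ) (hτ : 1 / 2 < τ)
    (ψ V : EuclideanSpace ℝ (Fin n) → ℝ)
    (hψ : ContDiff ℝ 2 ψ)
    (hψ1 : ∃ B, ∀ x, ‖fderiv ℝ ψ x‖ ≤ B)
    (hψ2 : ∃ B, ∀ x, ‖fderiv ℝ (fderiv ℝ ψ) x‖ ≤ B)
    (hV : ∀ x, V x = ψ x + (1 + θ * ‖x‖ ^ 2) ^ τ) :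
    ∃ c > (0 : ℝ),
      (∀ x, ‖gradient V x‖ ^ 2 ≤ c * (1 + ‖x‖ ^ (4 * τ))) ∧
      (∀ x y, ⟪gradient V x - gradient V y, x - y⟫ ≥ -c * ‖x - y‖ ^ 2) := by
  obtain ⟨B, hB⟩ := hψ1
  obtain ⟨B2, hB2⟩ := hψ2
  obtain rfl : V = fun x => ψ x + (1 + θ * ‖x‖ ^ 2) ^ τ := funext hV
  have hτ0 : (0 : ℝ) < τ := by linarith
  have hB0 : (0 : ℝ) ≤ B := le_trans (norm_nonneg _) (hB 0)
  have hB20 : (0 : ℝ) ≤ B2 := le_trans (norm_nonneg (fderiv ℝ (fderiv ℝ ψ) 0)) (hB2 0)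
  have hbase : ∀ r : ℝ, (0 : ℝ) < 1 + θ * r ^ 2 := fun r => by positivity
  -- gradient formula for V
  have hgradV : ∀ x : EuclideanSpace ℝ (Fin n),
      gradient (fun x => ψ x + (1 + θ * ‖x‖ ^ 2) ^ τ) x
        = gradient ψ x + (2 * θ * τ * (1 + θ * ‖x‖ ^ 2) ^ (τ - 1)) • x := by
    intro x
    have hψd : HasFDerivAt ψ (fderiv ℝ ψ x) x :=
      ((hψ.differentiable (by norm_num)) x).hasFDerivAt
    have hsq : HasFDerivAt (fun y : EuclideanSpace ℝ (Fin n) => ‖y‖ ^ 2)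
        (2 • innerSL ℝ x) x := (hasStrictFDerivAt_norm_sq x).hasFDerivAt
    have h1 : HasDerivAt (fun s : ℝ => 1 + θ * s) θ (‖x‖ ^ 2) := by
      simpa using ((hasDerivAt_id (‖x‖ ^ 2)).const_mul θ).const_add 1
    have h2 : HasDerivAt (fun t : ℝ => t ^ τ)
        (τ * (1 + θ * ‖x‖ ^ 2) ^ (τ - 1)) (1 + θ * ‖x‖ ^ 2) :=
      Real.hasDerivAt_rpow_const (Or.inl (hbase ‖x‖).ne')
    have hφ : HasDerivAt (fun s : ℝ => (1 + θ * s) ^ τ)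
        (τ * (1 + θ * ‖x‖ ^ 2) ^ (τ - 1) * θ) (‖x‖ ^ 2) :=
      HasDerivAt.comp (h := fun s : ℝ => 1 + θ * s) (x := ‖x‖ ^ 2) h2 h1
    have hg : HasFDerivAt (fun y : EuclideanSpace ℝ (Fin n) => (1 + θ * ‖y‖ ^ 2) ^ τ)
        ((τ * (1 + θ * ‖x‖ ^ 2) ^ (τ - 1) * θ) • (2 • innerSL ℝ x)) x :=
      hφ.comp_hasFDerivAt (h₂ := fun s : ℝ => (1 + θ * s) ^ τ) x hsq
    have hVd : HasFDerivAt (fun y : EuclideanSpace ℝ (Fin n) => ψ y + (1 + θ * ‖y‖ ^ 2) ^ τ)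
        (fderiv ℝ ψ x + (τ * (1 + θ * ‖x‖ ^ 2) ^ (τ - 1) * θ) • (2 • innerSL ℝ x)) x :=
      hψd.add hg
    have hVg : HasGradientAt (fun y : EuclideanSpace ℝ (Fin n) => ψ y + (1 + θ * ‖y‖ ^ 2) ^ τ)
        (gradient ψ x + (2 * θ * τ * (1 + θ * ‖x‖ ^ 2) ^ (τ - 1)) • x) x := by
      rw [hasGradientAt_iff_hasFDerivAt]
      refine hVd.congr_fderiv ?_
      ext y
      simp only [InnerProductSpace.toDual_apply_apply, inner_add_left, real_inner_smul_left,
        ContinuousLinearMap.add_apply, ContinuousLinearMap.smul_apply, smul_eq_mul,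
        two_smul, innerSL_apply_apply]
      simp only [gradient, InnerProductSpace.toDual_symm_apply]
      ring
    exact hVg.gradient
  -- norm of gradient ψ
  have hgψnorm : ∀ x, ‖gradient ψ x‖ = ‖fderiv ℝ ψ x‖ := by
    intro x
    exact (InnerProductSpace.toDual ℝ (EuclideanSpace ℝ (Fin n))).symm.norm_map _
  -- Lipschitz bound on gradient ψ
  have hψ'diff : ∀ z : EuclideanSpace ℝ (Fin n), DifferentiableAt ℝ (fderiv ℝ ψ) z := by
    have : ContDiff ℝ 1 (fderiv ℝ ψ) := hψ.fderiv_right (by norm_num)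
    exact fun z => (this.differentiable (by norm_num)) z
  have hlip : ∀ x y : EuclideanSpace ℝ (Fin n),
      ‖gradient ψ x - gradient ψ y‖ ≤ B2 * ‖x - y‖ := by
    intro x y
    have h1 : ‖gradient ψ x - gradient ψ y‖ = ‖fderiv ℝ ψ x - fderiv ℝ ψ y‖ := by
      rw [gradient, gradient, ← map_sub]
      exact (InnerProductSpace.toDual ℝ (EuclideanSpace ℝ (Fin n))).symm.norm_map _
    rw [h1]
    exact Convex.norm_image_sub_le_of_norm_fderiv_le
      (fun z _ => hψ'diff z) (fun z _ => hB2 z) convex_univ trivial trivial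
  -- monotonicity of r ↦ r (1+θr²)^(τ-1)
  have hFd : ∀ r : ℝ, HasDerivAt (fun r : ℝ => r * (1 + θ * r ^ 2) ^ (τ - 1))
      ((1 + θ * r ^ 2) ^ (τ - 2) * (1 + (2 * τ - 1) * (θ * r ^ 2))) r := by
    intro r
    have h1 : HasDerivAt (fun r : ℝ => 1 + θ * r ^ 2) (θ * (2 * r)) r := by
      have := (hasDerivAt_pow 2 r).const_mul θ
      simpa using this.const_add 1
    have h2 : HasDerivAt (fun t : ℝ => t ^ (τ - 1))
        ((τ - 1) * (1 + θ * r ^ 2) ^ (τ - 1 - 1)) (1 + θ * r ^ 2) :=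
      Real.hasDerivAt_rpow_const (Or.inl (hbase r).ne')
    have h3 : HasDerivAt (fun r : ℝ => (1 + θ * r ^ 2) ^ (τ - 1))
        ((τ - 1) * (1 + θ * r ^ 2) ^ (τ - 1 - 1) * (θ * (2 * r))) r :=
      HasDerivAt.comp (h := fun r : ℝ => 1 + θ * r ^ 2) (x := r) h2 h1
    have h4 : HasDerivAt (fun y : ℝ => y * (1 + θ * y ^ 2) ^ (τ - 1))
        (1 * (1 + θ * r ^ 2) ^ (τ - 1)
          + r * ((τ - 1) * (1 + θ * r ^ 2) ^ (τ - 1 - 1) * (θ * (2 * r)))) r := by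
      simpa [id_eq, Pi.mul_def] using (hasDerivAt_id' r).mul h3
    have e1 : (1 + θ * r ^ 2) ^ (τ - 1) = (1 + θ * r ^ 2) ^ (τ - 2) * (1 + θ * r ^ 2) := by
      rw [show τ - 1 = τ - 2 + 1 by ring, Real.rpow_add_one (hbase r).ne']
    have e2 : τ - 1 - 1 = τ - 2 := by ring
    convert h4 using 1
    rw [e2, e1]
    ring
  have hFmono : Monotone (fun r : ℝ => r * (1 + θ * r ^ 2) ^ (τ - 1)) := by
    apply monotone_of_deriv_nonneg
    · exact fun r => (hFd r).differentiableAt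
    · intro r
      rw [(hFd r).deriv]
      have h0 : (0:ℝ) ≤ (2 * τ - 1) * (θ * r ^ 2) :=
        mul_nonneg (by linarith) (by positivity)
      exact mul_nonneg (Real.rpow_nonneg (hbase r).le _) (by linarith)
  -- semiconvexity term
  have hmonoInner : ∀ x y : EuclideanSpace ℝ (Fin n),
      0 ≤ ⟪(2 * θ * τ * (1 + θ * ‖x‖ ^ 2) ^ (τ - 1)) • x
            - (2 * θ * τ * (1 + θ * ‖y‖ ^ 2) ^ (τ - 1)) • y, x - y⟫ := by
    intro x y
    have hAnn : 0 ≤ (1 + θ * ‖x‖ ^ 2) ^ (τ - 1) := Real.rpow_nonneg (hbase ‖x‖).le _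
    have hA'nn : 0 ≤ (1 + θ * ‖y‖ ^ 2) ^ (τ - 1) := Real.rpow_nonneg (hbase ‖y‖).le _
    have hxy : ⟪x, y⟫ ≤ ‖x‖ * ‖y‖ := real_inner_le_norm x y
    have hFm : 0 ≤ (‖x‖ * (1 + θ * ‖x‖ ^ 2) ^ (τ - 1)
        - ‖y‖ * (1 + θ * ‖y‖ ^ 2) ^ (τ - 1)) * (‖x‖ - ‖y‖) := by
      rcases le_total ‖x‖ ‖y‖ with h | h
      · have ha : ‖x‖ * (1 + θ * ‖x‖ ^ 2) ^ (τ - 1)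
            ≤ ‖y‖ * (1 + θ * ‖y‖ ^ 2) ^ (τ - 1) := hFmono h
        nlinarith [mul_nonneg (neg_nonneg.2 (sub_nonpos.2 ha))
          (neg_nonneg.2 (sub_nonpos.2 h))]
      · have ha : ‖y‖ * (1 + θ * ‖y‖ ^ 2) ^ (τ - 1)
            ≤ ‖x‖ * (1 + θ * ‖x‖ ^ 2) ^ (τ - 1) := hFmono h
        nlinarith [mul_nonneg (sub_nonneg.2 ha) (sub_nonneg.2 h)]
    have key : ((1 + θ * ‖x‖ ^ 2) ^ (τ - 1) + (1 + θ * ‖y‖ ^ 2) ^ (τ - 1)) * ⟪x, y⟫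
        ≤ ((1 + θ * ‖x‖ ^ 2) ^ (τ - 1) + (1 + θ * ‖y‖ ^ 2) ^ (τ - 1)) * (‖x‖ * ‖y‖) :=
      mul_le_mul_of_nonneg_left hxy (by linarith)
    have h2θτ : (0:ℝ) < 2 * θ * τ := by positivity
    rw [inner_sub_left, inner_sub_right, inner_sub_right, real_inner_smul_left,
      real_inner_smul_left, real_inner_smul_left, real_inner_smul_left,
      real_inner_self_eq_norm_sq, real_inner_self_eq_norm_sq]
    rw [real_inner_comm x y]
    nlinarith [mul_nonneg h2θτ.le hFm, mul_le_mul_of_nonneg_left key h2θτ.le]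
  -- growth bound for the nonlinear part
  have hgrow : ∀ x : EuclideanSpace ℝ (Fin n),
      ((1 + θ * ‖x‖ ^ 2) ^ (τ - 1)) ^ 2 * ‖x‖ ^ 2
        ≤ (1 / θ) * ((1 + θ) ^ (2 * τ) * 2 ^ (2 * τ)) * (1 + ‖x‖ ^ (4 * τ)) := by
    intro x
    have hun : (0:ℝ) ≤ ‖x‖ := norm_nonneg x
    set u := ‖x‖ with hu
    set P := 1 + θ * u ^ 2 with hP
    have hP0 : 0 < P := hbase u
    have hP1 : 1 ≤ P := by nlinarith [sq_nonneg u]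
    have e1 : ((P ^ (τ - 1)) ^ 2 : ℝ) = P ^ (2 * τ - 2) := by
      rw [← Real.rpow_natCast (P ^ (τ - 1)) 2, ← Real.rpow_mul hP0.le,
        show (τ - 1) * ((2:ℕ):ℝ) = 2 * τ - 2 by push_cast; ring]
    have step1 : P ^ (2 * τ - 2) * u ^ 2 ≤ (1 / θ) * P ^ (2 * τ - 1) := by
      have h1 : u ^ 2 ≤ P / θ := by
        rw [le_div_iff₀ hθ]
        nlinarith
      have h2 : P ^ (2 * τ - 2) * u ^ 2 ≤ P ^ (2 * τ - 2) * (P / θ) :=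
        mul_le_mul_of_nonneg_left h1 (Real.rpow_nonneg hP0.le _)
      have h3 : P ^ (2 * τ - 2) * (P / θ) = (1 / θ) * P ^ (2 * τ - 1) := by
        rw [show 2 * τ - 1 = 2 * τ - 2 + 1 by ring, Real.rpow_add_one hP0.ne']
        ring
      linarith
    have step2 : P ^ (2 * τ - 1) ≤ P ^ (2 * τ) :=
      Real.rpow_le_rpow_of_exponent_le hP1 (by linarith)
    have step3 : P ^ (2 * τ) ≤ ((1 + θ) * (1 + u ^ 2)) ^ (2 * τ) := by
      apply Real.rpow_le_rpow hP0.le _ (by linarith)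
      nlinarith [sq_nonneg u]
    have step4 : ((1 + θ) * (1 + u ^ 2)) ^ (2 * τ)
        = (1 + θ) ^ (2 * τ) * (1 + u ^ 2) ^ (2 * τ) :=
      Real.mul_rpow (by linarith) (by positivity)
    have step5 : (1 + u ^ 2) ^ (2 * τ) ≤ 2 ^ (2 * τ) * (1 + u ^ (4 * τ)) := by
      have hu4 : u ^ (4 * τ) = (u ^ 2 : ℝ) ^ (2 * τ) := by
        rw [← Real.rpow_natCast u 2, ← Real.rpow_mul hun,
          show ((2:ℕ):ℝ) * (2 * τ) = 4 * τ by push_cast; ring]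
      rcases le_total (u ^ 2 : ℝ) 1 with h | h
      · have h1 : (1 + u ^ 2 : ℝ) ^ (2 * τ) ≤ (2:ℝ) ^ (2 * τ) :=
          Real.rpow_le_rpow (by positivity) (by linarith) (by linarith)
        have h2 : (0:ℝ) ≤ u ^ (4 * τ) := Real.rpow_nonneg hun _
        nlinarith [Real.rpow_nonneg (show (0:ℝ) ≤ 2 by norm_num) (2 * τ)]
      · have h1 : (1 + u ^ 2 : ℝ) ^ (2 * τ) ≤ (2 * u ^ 2 : ℝ) ^ (2 * τ) :=
          Real.rpow_le_rpow (by positivity) (by linarith) (by linarith)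
        have h2 : (2 * u ^ 2 : ℝ) ^ (2 * τ) = 2 ^ (2 * τ) * (u ^ 2 : ℝ) ^ (2 * τ) :=
          Real.mul_rpow (by norm_num) (by positivity)
        rw [hu4]
        have h3 : (0:ℝ) ≤ (2:ℝ) ^ (2 * τ) := Real.rpow_nonneg (by norm_num) _
        nlinarith [Real.rpow_nonneg (sq_nonneg u) (2 * τ)]
    have hQ : (0:ℝ) ≤ (1 + θ) ^ (2 * τ) := Real.rpow_nonneg (by linarith) _
    calc ((P ^ (τ - 1)) ^ 2 : ℝ) * u ^ 2 = P ^ (2 * τ - 2) * u ^ 2 := by rw [e1]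
      _ ≤ (1 / θ) * P ^ (2 * τ - 1) := step1
      _ ≤ (1 / θ) * P ^ (2 * τ) := by
          apply mul_le_mul_of_nonneg_left step2 (by positivity)
      _ ≤ (1 / θ) * ((1 + θ) ^ (2 * τ) * (1 + u ^ 2) ^ (2 * τ)) := by
          apply mul_le_mul_of_nonneg_left _ (by positivity)
          rw [← step4]; exact step3
      _ ≤ (1 / θ) * ((1 + θ) ^ (2 * τ) * (2 ^ (2 * τ) * (1 + u ^ (4 * τ)))) := by
          apply mul_le_mul_of_nonneg_left _ (by positivity)
          exact mul_le_mul_of_nonneg_left step5 hQ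
      _ = (1 / θ) * ((1 + θ) ^ (2 * τ) * 2 ^ (2 * τ)) * (1 + u ^ (4 * τ)) := by ring
  -- assemble the constant
  set K : ℝ := (1 / θ) * ((1 + θ) ^ (2 * τ) * 2 ^ (2 * τ)) with hK
  have hK0 : 0 ≤ K := by
    have h1 : (0:ℝ) ≤ (1 + θ) ^ (2 * τ) := Real.rpow_nonneg (by linarith) _
    have h2 : (0:ℝ) ≤ (2:ℝ) ^ (2 * τ) := Real.rpow_nonneg (by norm_num) _
    rw [hK]
    exact mul_nonneg (by positivity) (mul_nonneg h1 h2)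
  have h8K : (0:ℝ) ≤ 8 * θ ^ 2 * τ ^ 2 * K :=
    mul_nonneg (by positivity) hK0
  refine ⟨2 * B ^ 2 + 8 * θ ^ 2 * τ ^ 2 * K + B2 + 1,
    by nlinarith [sq_nonneg B], ?_, ?_⟩
  · intro x
    have hAnn : (0:ℝ) ≤ (1 + θ * ‖x‖ ^ 2) ^ (τ - 1) := Real.rpow_nonneg (hbase ‖x‖).le _
    have hun : (0:ℝ) ≤ ‖x‖ := norm_nonneg x
    have h0 : (0:ℝ) ≤ 2 * θ * τ * (1 + θ * ‖x‖ ^ 2) ^ (τ - 1) :=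
      mul_nonneg (by positivity) hAnn
    have h1 : ‖gradient (fun x => ψ x + (1 + θ * ‖x‖ ^ 2) ^ τ) x‖
        ≤ B + 2 * θ * τ * (1 + θ * ‖x‖ ^ 2) ^ (τ - 1) * ‖x‖ := by
      rw [hgradV x]
      refine le_trans (norm_add_le _ _) ?_
      rw [norm_smul, Real.norm_eq_abs, abs_of_nonneg h0]
      have h5 := hB x
      rw [← hgψnorm x] at h5
      linarith
    have h2 : ‖gradient (fun x => ψ x + (1 + θ * ‖x‖ ^ 2) ^ τ) x‖ ^ 2
        ≤ (B + 2 * θ * τ * (1 + θ * ‖x‖ ^ 2) ^ (τ - 1) * ‖x‖) ^ 2 :=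
      pow_le_pow_left₀ (norm_nonneg _) h1 2
    have h3 : (B + 2 * θ * τ * (1 + θ * ‖x‖ ^ 2) ^ (τ - 1) * ‖x‖) ^ 2
        ≤ 2 * B ^ 2 + 8 * θ ^ 2 * τ ^ 2 * (((1 + θ * ‖x‖ ^ 2) ^ (τ - 1)) ^ 2 * ‖x‖ ^ 2) := by
      nlinarith [sq_nonneg (B - 2 * θ * τ * (1 + θ * ‖x‖ ^ 2) ^ (τ - 1) * ‖x‖)]
    have h4 := hgrow x
    have h5 : (0:ℝ) ≤ ‖x‖ ^ (4 * τ) := Real.rpow_nonneg hun _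
    have h6 : 8 * θ ^ 2 * τ ^ 2 * (((1 + θ * ‖x‖ ^ 2) ^ (τ - 1)) ^ 2 * ‖x‖ ^ 2)
        ≤ 8 * θ ^ 2 * τ ^ 2 * (K * (1 + ‖x‖ ^ (4 * τ))) := by
      apply mul_le_mul_of_nonneg_left _ (by positivity)
      rw [hK]
      ring_nf
      rw [hK] at h4
      ring_nf at h4
      exact h4
    nlinarith [mul_nonneg (sq_nonneg B) h5, mul_nonneg hB20 h5, mul_nonneg h8K h5]
  · intro x y
    have hsplit : gradient (fun x => ψ x + (1 + θ * ‖x‖ ^ 2) ^ τ) x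
          - gradient (fun x => ψ x + (1 + θ * ‖x‖ ^ 2) ^ τ) y
        = (gradient ψ x - gradient ψ y)
          + ((2 * θ * τ * (1 + θ * ‖x‖ ^ 2) ^ (τ - 1)) • x
             - (2 * θ * τ * (1 + θ * ‖y‖ ^ 2) ^ (τ - 1)) • y) := by
      rw [hgradV x, hgradV y]; abel
    rw [hsplit, inner_add_left]
    have h1 := hmonoInner x y
    have h2 : -(B2 * ‖x - y‖ ^ 2) ≤ ⟪gradient ψ x - gradient ψ y, x - y⟫ := by
      have h3 := abs_real_inner_le_norm (gradient ψ x - gradient ψ y) (x - y)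
      have h4 : ‖gradient ψ x - gradient ψ y‖ * ‖x - y‖ ≤ B2 * ‖x - y‖ * ‖x - y‖ :=
        mul_le_mul_of_nonneg_right (hlip x y) (norm_nonneg _)
      have h5 := neg_abs_le (⟪gradient ψ x - gradient ψ y, x - y⟫ : ℝ)
      nlinarith
    have h6 : (0:ℝ) ≤ ‖x - y‖ ^ 2 := sq_nonneg _
    nlinarith [mul_nonneg (sq_nonneg B) h6, mul_nonneg h8K h6, h6]
end

section
/- Let l > 2 and define ρ_L(x) = | ∫_{1/2}^x (s(1−s))^{−l/2} ds | for x ∈ (0,1). Then for every ε > 0, ∫₀¹ e^{ε ρ_L(x)} dx = ∞. -/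
open MeasureTheory

/-- for the intrinsic distance
`ρ_L(x) = |∫_{1/2}^x (s(1-s))^{-l/2} ds|`, the integral `∫₀¹ e^{ε ρ_L} dx` is infinite
for every `ε > 0`. -/
theorem stmt_10 (l : ℝ) (hl : 2 < l)
    (ρL : ℝ → ℝ)
    (hρ : ∀ x ∈ Set.Ioo (0 : ℝ) 1,
      ρL x = |∫ s in (1 / 2 : ℝ)..x, (s * (1 - s)) ^ (-(l / 2))|) :
    ∀ ε > (0 : ℝ),
      ∫⁻ x in Set.Ioo (0 : ℝ) 1, ENNReal.ofReal (Real.exp (ε * ρL x)) = ⊤ := by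
  intro ε hε
  set a : ℝ := l / 2 - 1 with ha_def
  have ha : 0 < a := by simp only [ha_def]; linarith
  set b : ℝ := ε / a with hb_def
  have hb : 0 < b := div_pos hε ha
  set n : ℕ := ⌈1 / a⌉₊ with hn_def
  have hna : 1 ≤ (n : ℝ) * a := by
    have h1 := Nat.le_ceil (1 / a)
    calc (1 : ℝ) = (1 / a) * a := by field_simp
    _ ≤ (n : ℝ) * a := by
        apply mul_le_mul_of_nonneg_right _ ha.le
        exact_mod_cast h1
  set K : ℝ := Real.exp (-(b * (1 / 2 : ℝ) ^ (-a))) with hK_def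
  have hK : 0 < K := Real.exp_pos _
  set C : ℝ := K * (b ^ n / n.factorial) with hC_def
  have hC : 0 < C := by positivity
  -- pointwise lower bound on Ioo 0 (1/2)
  have key : ∀ x ∈ Set.Ioo (0 : ℝ) (1 / 2), C * x⁻¹ ≤ Real.exp (ε * ρL x) := by
    intro x hx
    obtain ⟨hx0, hx2⟩ := hx
    have hx1 : x < 1 := hx2.trans (by norm_num)
    -- step 1: identify ρL x
    have hval : ρL x = ∫ s in x..(1 / 2 : ℝ), (s * (1 - s)) ^ (-(l / 2)) := by
      rw [hρ x ⟨hx0, hx1⟩, intervalIntegral.integral_symm x (1 / 2), abs_neg, abs_of_nonneg]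
      apply intervalIntegral.integral_nonneg hx2.le
      intro s hs
      exact Real.rpow_nonneg (mul_nonneg (hx0.le.trans hs.1) (by nlinarith [hs.2])) _
    -- integrability of both integrands on [x, 1/2]
    have hgc : ContinuousOn (fun s : ℝ => (s * (1 - s)) ^ (-(l / 2))) (Set.Icc x (1 / 2)) := by
      apply ContinuousOn.rpow_const
      · exact (continuousOn_id.mul (continuousOn_const.sub continuousOn_id))
      · intro s hs
        left
        have h1 : 0 < s := lt_of_lt_of_le hx0 hs.1
        have h2 : 0 < 1 - s := by nlinarith [hs.2]
        positivity
    have hfc : ContinuousOn (fun s : ℝ => s ^ (-(l / 2))) (Set.Icc x (1 / 2)) := by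
      apply ContinuousOn.rpow_const continuousOn_id
      intro s hs
      exact Or.inl (lt_of_lt_of_le hx0 hs.1).ne'
    have hxle : x ≤ (1 / 2 : ℝ) := hx2.le
    have hfi : IntervalIntegrable (fun s : ℝ => s ^ (-(l / 2))) volume x (1 / 2) :=
      (hfc.mono (by rw [Set.uIcc_of_le hxle])).intervalIntegrable
    have hgi : IntervalIntegrable (fun s : ℝ => (s * (1 - s)) ^ (-(l / 2))) volume x (1 / 2) :=
      (hgc.mono (by rw [Set.uIcc_of_le hxle])).intervalIntegrable
    -- step 2: lower bound by ∫ s^{-l/2}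
    have hmono : (∫ s in x..(1 / 2 : ℝ), s ^ (-(l / 2)))
        ≤ ∫ s in x..(1 / 2 : ℝ), (s * (1 - s)) ^ (-(l / 2)) := by
      apply intervalIntegral.integral_mono_on hxle hfi hgi
      intro s hs
      have h1 : 0 < s := lt_of_lt_of_le hx0 hs.1
      have h2 : 0 < 1 - s := by nlinarith [hs.2]
      have hle : s * (1 - s) ≤ s := by nlinarith
      exact Real.rpow_le_rpow_of_nonpos (by positivity) hle (by linarith)
    -- step 3: compute the integral of s^{-l/2}
    have hcomp : (∫ s in x..(1 / 2 : ℝ), s ^ (-(l / 2)))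
        = (x ^ (-a) - (1 / 2 : ℝ) ^ (-a)) / a := by
      rw [integral_rpow]
      · have h1 : -(l / 2) + 1 = -a := by simp only [ha_def]; ring
        rw [h1]
        rw [div_neg, ← neg_div, neg_sub]
      · right
        constructor
        · intro h; rw [neg_eq_iff_eq_neg] at h; linarith [h]
        · rw [Set.uIcc_of_le hxle]
          intro h
          exact absurd h.1 (not_le.mpr hx0)
    -- combine: ε * ρL x ≥ b * x^{-a} - b * (1/2)^{-a}
    have hlow : b * x ^ (-a) - b * (1 / 2 : ℝ) ^ (-a) ≤ ε * ρL x := by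
      rw [hval]
      have := hmono
      rw [hcomp] at this
      have h2 : ε * ((x ^ (-a) - (1 / 2 : ℝ) ^ (-a)) / a)
          ≤ ε * ∫ s in x..(1 / 2 : ℝ), (s * (1 - s)) ^ (-(l / 2)) :=
        mul_le_mul_of_nonneg_left this hε.le
      calc b * x ^ (-a) - b * (1 / 2 : ℝ) ^ (-a)
          = ε * ((x ^ (-a) - (1 / 2 : ℝ) ^ (-a)) / a) := by
            rw [hb_def]; field_simp
      _ ≤ _ := h2
    -- step 4: exponential lower bound
    have hxa : 0 < x ^ (-a) := Real.rpow_pos_of_pos hx0 _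
    calc C * x⁻¹ = K * (b ^ n / n.factorial) * x⁻¹ := by rw [hC_def]
      _ ≤ K * (b ^ n / n.factorial) * x ^ (-((n : ℝ) * a)) := by
          apply mul_le_mul_of_nonneg_left _ (by positivity)
          rw [← Real.rpow_neg_one x]
          exact Real.rpow_le_rpow_of_exponent_ge hx0 hx1.le (by linarith)
      _ = K * ((b * x ^ (-a)) ^ n / n.factorial) := by
          rw [mul_pow, ← Real.rpow_natCast (x ^ (-a)) n, ← Real.rpow_mul hx0.le]
          ring_nf
      _ ≤ K * Real.exp (b * x ^ (-a)) := by
          apply mul_le_mul_of_nonneg_left _ hK.le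
          exact Real.pow_div_factorial_le_exp _ (by positivity) n
      _ = Real.exp (b * x ^ (-a) - b * (1 / 2 : ℝ) ^ (-a)) := by
          rw [hK_def, ← Real.exp_add]; ring_nf
      _ ≤ Real.exp (ε * ρL x) := Real.exp_le_exp.mpr hlow
  -- the comparison integral is infinite
  have Tbound : ∫⁻ x in Set.Ioo (0 : ℝ) (1 / 2), ENNReal.ofReal (C * x⁻¹) = ⊤ := by
    by_contra h
    have hmeas : Measurable fun x : ℝ => C * x⁻¹ := measurable_const.mul measurable_inv
    have hint : IntegrableOn (fun x : ℝ => C * x⁻¹) (Set.Ioo 0 (1 / 2)) := by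
      refine ⟨hmeas.aestronglyMeasurable, ?_⟩
      rw [hasFiniteIntegral_iff_ofReal]
      · exact lt_top_iff_ne_top.mpr h
      · filter_upwards [ae_restrict_mem measurableSet_Ioo] with x hx
        have : 0 < x := hx.1
        positivity
    have hint2 : IntegrableOn (fun x : ℝ => x ^ (-1 : ℝ)) (Set.Ioo 0 (1 / 2)) := by
      have h4 : IntegrableOn (fun x : ℝ => C⁻¹ * (C * x⁻¹)) (Set.Ioo 0 (1 / 2)) :=
        hint.const_mul C⁻¹
      refine h4.congr_fun (fun x hx => ?_) measurableSet_Ioo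
      rw [Real.rpow_neg_one]
      field_simp
    rw [intervalIntegral.integrableOn_Ioo_rpow_iff (by norm_num : (0 : ℝ) < 1 / 2)] at hint2
    linarith
  rw [eq_top_iff, ← Tbound]
  calc ∫⁻ x in Set.Ioo (0 : ℝ) (1 / 2), ENNReal.ofReal (C * x⁻¹)
      ≤ ∫⁻ x in Set.Ioo (0 : ℝ) (1 / 2), ENNReal.ofReal (Real.exp (ε * ρL x)) := by
        apply lintegral_mono_ae
        filter_upwards [ae_restrict_mem measurableSet_Ioo] with x hx
        exact ENNReal.ofReal_le_ofReal (key x hx)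
    _ ≤ ∫⁻ x in Set.Ioo (0 : ℝ) 1, ENNReal.ofReal (Real.exp (ε * ρL x)) :=
        lintegral_mono' (Measure.restrict_mono (Set.Ioo_subset_Ioo_right (by norm_num)) le_rfl)
          le_rfl
end

section
/- Let l > 2. There exists a constant C > 0 such that for every s ∈ (0, 1/2) and every continuously differentiable function f : [s, 1/2] → ℝ with f(1/2) = 0, one has ∫_s^{1/2} f(x)² dx ≤ C s^{1−l} ∫_s^{1/2} (x(1−x))^l f'(x)² dx. -/
/-- Pointwise weight bound: for `x ∈ [s, 1/2]`, `2 x² ≤ 2^l s^(1-l) (x(1-x))^l`. -/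
lemma aux_hardy_11 (l s x : ℝ) (hl : 2 < l) (hs0 : 0 < s) (hs2 : s < 1/2)
    (hx1 : s ≤ x) (hx2 : x ≤ 1/2) :
    2 * x ^ 2 ≤ 2 ^ l * s ^ (1 - l) * (x * (1 - x)) ^ l := by
  have hxpos : 0 < x := lt_of_lt_of_le hs0 hx1
  have h1x : (1/2:ℝ) ≤ 1 - x := by linarith
  have hl0 : (0:ℝ) ≤ l := by linarith
  have hmul : (x * (1-x)) ^ l = x ^ l * (1-x) ^ l := Real.mul_rpow hxpos.le (by linarith)
  have h6 : (1/2:ℝ) ^ l ≤ (1-x) ^ l := Real.rpow_le_rpow (by norm_num) h1x hl0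
  have h7 : (2:ℝ) ^ l * (1/2:ℝ) ^ l = 1 := by
    rw [← Real.mul_rpow (by norm_num) (by norm_num)]
    norm_num
  have hxl : x ^ l = x ^ 2 * x ^ (l-2) := by
    rw [← Real.rpow_natCast x 2, ← Real.rpow_add hxpos]
    norm_num
  have h2 : s ^ (l-2) ≤ x ^ (l-2) := Real.rpow_le_rpow hs0.le hx1 (by linarith)
  have h3 : s ^ (1-l) * s ^ (l-2) = s⁻¹ := by
    rw [← Real.rpow_add hs0, ← Real.rpow_neg_one s]
    norm_num
  have h4 : (2:ℝ) ≤ s⁻¹ := by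
    have h := inv_mul_cancel₀ hs0.ne'
    have hip : (0:ℝ) < s⁻¹ := inv_pos.mpr hs0
    nlinarith [mul_nonneg hip.le (by linarith : (0:ℝ) ≤ 1/2 - s)]
  have h5 : (0:ℝ) < s ^ (1-l) := Real.rpow_pos_of_pos hs0 _
  have hAB : (2:ℝ) ≤ s^(1-l) * x^(l-2) := by
    calc (2:ℝ) ≤ s⁻¹ := h4
      _ = s^(1-l) * s^(l-2) := h3.symm
      _ ≤ s^(1-l) * x^(l-2) := mul_le_mul_of_nonneg_left h2 h5.le
  have key : 2 * x^2 ≤ s^(1-l) * x^l := by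
    rw [hxl]
    calc 2 * x^2 ≤ (s^(1-l) * x^(l-2)) * x^2 :=
          mul_le_mul_of_nonneg_right hAB (sq_nonneg x)
      _ = s^(1-l) * (x^2 * x^(l-2)) := by ring
  have hx_l_nonneg : (0:ℝ) ≤ x ^ l := (Real.rpow_pos_of_pos hxpos l).le
  have h2l : (0:ℝ) < (2:ℝ) ^ l := Real.rpow_pos_of_pos (by norm_num) l
  rw [hmul]
  have heq : s^(1-l) * x^l = 2^l * s^(1-l) * (x^l * (1/2:ℝ)^l) := by
    rw [show (2:ℝ)^l * s^(1-l) * (x^l*(1/2:ℝ)^l) = ((2:ℝ)^l*(1/2:ℝ)^l) * (s^(1-l)*x^l) by ring, h7,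
      one_mul]
  calc 2 * x^2 ≤ s^(1-l) * x^l := key
    _ = 2^l * s^(1-l) * (x^l * (1/2:ℝ)^l) := heq
    _ ≤ 2^l * s^(1-l) * (x^l * (1-x)^l) := by
        gcongr

/-- weighted Hardy inequality
`∫_s^{1/2} f² ≤ C s^{1-l} ∫_s^{1/2} (x(1-x))^l f'²` for `f(1/2) = 0`. -/
theorem stmt_11 (l : ℝ) (hl : 2 < l) :
    ∃ C > (0 : ℝ), ∀ s ∈ Set.Ioo (0 : ℝ) (1 / 2), ∀ f f' : ℝ → ℝ,
      (∀ x ∈ Set.Icc s (1 / 2), HasDerivAt f (f' x) x) →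
      ContinuousOn f' (Set.Icc s (1 / 2)) →
      f (1 / 2) = 0 →
      (∫ x in s..(1 / 2 : ℝ), (f x) ^ 2)
        ≤ C * s ^ (1 - l) * ∫ x in s..(1 / 2 : ℝ), (x * (1 - x)) ^ l * (f' x) ^ 2 := by
  refine ⟨2 * 2 ^ l, by positivity, ?_⟩
  rintro s ⟨hs0, hs2⟩ f f' hderiv hcont hf0
  have hsle : s ≤ 1/2 := hs2.le
  have hIcc : Set.uIcc s (1/2:ℝ) = Set.Icc s (1/2) := Set.uIcc_of_le hsle
  have hfc : ContinuousOn f (Set.Icc s (1/2)) := fun x hx =>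
    (hderiv x hx).continuousAt.continuousWithinAt
  have hwcont : Continuous (fun x : ℝ => (x*(1-x))^l) := by
    apply Continuous.rpow_const (by continuity)
    intro x; exact Or.inr (by linarith)
  -- integrability facts
  have hi1 : IntervalIntegrable (fun x => 2 * f x * f' x) MeasureTheory.volume s (1/2) := by
    apply ContinuousOn.intervalIntegrable
    rw [hIcc]
    exact (continuousOn_const.mul hfc).mul hcont
  have hineg : IntervalIntegrable (fun x => -(2 * f x * f' x * x)) MeasureTheory.volume s (1/2) := by
    apply ContinuousOn.intervalIntegrable
    rw [hIcc]
    exact (((continuousOn_const.mul hfc).mul hcont).mul continuousOn_id).neg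
  have hia : IntervalIntegrable (fun x => (1/2:ℝ) * f x ^ 2) MeasureTheory.volume s (1/2) := by
    apply ContinuousOn.intervalIntegrable
    rw [hIcc]
    exact continuousOn_const.mul (hfc.pow 2)
  have hib : IntervalIntegrable
      (fun x => (2^l * s^(1-l)) * ((x*(1-x))^l * f' x ^ 2)) MeasureTheory.volume s (1/2) := by
    apply ContinuousOn.intervalIntegrable
    rw [hIcc]
    exact continuousOn_const.mul (hwcont.continuousOn.mul (hcont.pow 2))
  -- integration by parts
  have hu : ∀ x ∈ Set.uIcc s (1/2:ℝ), HasDerivAt (fun y => f y ^ 2) (2 * f x * f' x) x := by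
    intro x hx
    rw [hIcc] at hx
    have h := (hderiv x hx).fun_pow 2
    simpa [mul_comm, mul_assoc, mul_left_comm] using h
  have hv : ∀ x ∈ Set.uIcc s (1/2:ℝ), HasDerivAt (fun y : ℝ => y) (1:ℝ) x :=
    fun x _ => hasDerivAt_id x
  have hibp := intervalIntegral.integral_mul_deriv_eq_deriv_mul hu hv hi1
    intervalIntegrable_const
  simp only [mul_one, hf0] at hibp
  -- hibp : ∫ f² = 0^2 * (1/2) - f s ^2 * s - ∫ 2 f f' x
  have hmono : (∫ x in s..(1/2:ℝ), -(2 * f x * f' x * x))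
      ≤ ∫ x in s..(1/2:ℝ), ((1/2:ℝ) * f x ^ 2 + (2^l * s^(1-l)) * ((x*(1-x))^l * f' x ^ 2)) := by
    apply intervalIntegral.integral_mono_on hsle hineg (hia.add hib)
    intro x hx
    obtain ⟨hx1, hx2⟩ := hx
    have key := aux_hardy_11 l s x hl hs0 hs2 hx1 hx2
    nlinarith [sq_nonneg (f x + 2*x*f' x),
      mul_le_mul_of_nonneg_right key (sq_nonneg (f' x)), sq_nonneg (f' x)]
  have hsplit : (∫ x in s..(1/2:ℝ),
      ((1/2:ℝ) * f x ^ 2 + (2^l * s^(1-l)) * ((x*(1-x))^l * f' x ^ 2)))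
      = (1/2:ℝ) * (∫ x in s..(1/2:ℝ), f x ^ 2)
        + (2^l * s^(1-l)) * ∫ x in s..(1/2:ℝ), (x*(1-x))^l * f' x ^ 2 := by
    rw [intervalIntegral.integral_add hia hib, intervalIntegral.integral_const_mul,
      intervalIntegral.integral_const_mul]
  rw [intervalIntegral.integral_neg] at hmono
  have hfs : (0:ℝ) ≤ f s ^ 2 * s := mul_nonneg (sq_nonneg _) hs0.le
  have hfinal : (2 * 2^l) * s^(1-l) * (∫ x in s..(1/2:ℝ), (x*(1-x))^l * f' x ^ 2)
      = 2 * ((2^l * s^(1-l)) * ∫ x in s..(1/2:ℝ), (x*(1-x))^l * f' x ^ 2) := by ring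
  rw [hsplit] at hmono
  rw [hfinal]
  simp only [zero_pow, ne_eq, OfNat.ofNat_ne_zero, not_false_eq_true, zero_mul] at hibp
  linarith [hibp, hmono]
end
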